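/- Let Γ be a simplicial graph and let Hor(Γ) be its combinatorial horoball: the graph with vertex set Γ⁽⁰⁾ × ℕ, with vertical edges joining (p,n) to (p,n+1), and horizontal edges joining (p,n) to (q,n) whenever d_Γ(p,q) ≤ 2ⁿ. Then for any two vertices x, y in Γ (i.e., at level 0), the distance in Hor(Γ) satisfies d_{Hor(Γ)}(x,y) ≥ (2/3)·log₂(d_Γ(x,y)) + 1, provided d_Γ(x,y) ≥ 2. -/

import Mathlib

/-- The combinatorial horoball over a simplicial graph `G`: vertex set `V × ℕ`,
with vertical edges `(p,n)–(p,n+1)` and horizontal edges `(p,n)–(q,n)`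
whenever `0 < d_G(p,q) ≤ 2^n`. -/
def SimpleGraph.horoball {V : Type*} (G : SimpleGraph V) : SimpleGraph (V × ℕ) where
  Adj x y := (x.1 = y.1 ∧ (x.2 = y.2 + 1 ∨ y.2 = x.2 + 1)) ∨
    (x.2 = y.2 ∧ x.1 ≠ y.1 ∧ G.dist x.1 y.1 ≤ 2 ^ x.2)
  symm := by
    constructor
    rintro ⟨p, n⟩ ⟨q, m⟩ (⟨h1, h2⟩ | ⟨h1, h2, h3⟩)
    · exact Or.inl ⟨h1.symm, h2.symm⟩
    · refine Or.inr ⟨h1.symm, h2.symm, ?_⟩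
      rw [G.dist_comm] at h3
      rwa [← h1]
  loopless := by
    constructor
    rintro ⟨p, n⟩ (⟨-, h⟩ | ⟨-, h, -⟩)
    · omega
    · exact h rfl

/-- Key walk invariant: for any walk in the horoball from `a` to `c`,
the level of `a` is at most `length + level of c`, and
`d_G(a.1, c.1) + 2^(a.2) ≤ 2^(length + c.2)`. -/
private lemma horoball_walk_bound {V : Type*} (G : SimpleGraph V) (hconn : G.Connected)
    {a c : V × ℕ} (w : G.horoball.Walk a c) :
    a.2 ≤ w.length + c.2 ∧ G.dist a.1 c.1 + 2 ^ a.2 ≤ 2 ^ (w.length + c.2) := by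
  induction w with
  | nil => simp
  | @cons a b c h w ih =>
    obtain ⟨p, m⟩ := a
    obtain ⟨r, n⟩ := b
    obtain ⟨q, k⟩ := c
    obtain ⟨hib, hid⟩ := ih
    have hib' : n ≤ w.length + k := hib
    have hid' : G.dist r q + 2 ^ n ≤ 2 ^ (w.length + k) := hid
    have htri : G.dist p q ≤ G.dist p r + G.dist r q := hconn.dist_triangle
    simp only [SimpleGraph.Walk.length_cons]
    have e1 : (2:ℕ) ^ (w.length + 1 + k) = 2 ^ (w.length + k) + 2 ^ (w.length + k) := by
      rw [show w.length + 1 + k = (w.length + k) + 1 by omega, pow_succ]; ring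
    have hpb : (2:ℕ) ^ n ≤ 2 ^ (w.length + k) :=
      Nat.pow_le_pow_right (by norm_num) hib'
    rcases h with ⟨h1, h2 | h2⟩ | ⟨h1, -, h3⟩
    · -- going down: m = n + 1
      have h1' : p = r := h1
      have h2' : m = n + 1 := h2
      subst h1'
      subst h2'
      have e2 : (2:ℕ) ^ (n + 1) = 2 ^ n + 2 ^ n := by rw [pow_succ]; ring
      exact ⟨by omega, by omega⟩
    · -- going up: n = m + 1
      have h1' : p = r := h1
      have h2' : n = m + 1 := h2
      subst h1'
      subst h2'
      have e2 : (2:ℕ) ^ m ≤ 2 ^ (m + 1) := Nat.pow_le_pow_right (by norm_num) (by omega)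
      exact ⟨by omega, by omega⟩
    · -- horizontal: m = n, d(p,r) ≤ 2^m
      have h1' : m = n := h1
      have h3' : G.dist p r ≤ 2 ^ m := h3
      subst h1'
      exact ⟨by omega, by omega⟩

/-- For a walk between two level-0 vertices of positive length `ℓ`,
`d_G(x,y) ≤ 2^(ℓ-1)`. -/
private lemma horoball_walk_bound0 {V : Type*} (G : SimpleGraph V) (hconn : G.Connected)
    {x y : V} (w : G.horoball.Walk (x, 0) (y, 0)) (hw : w.length ≠ 0) :
    G.dist x y ≤ 2 ^ (w.length - 1) := by
  cases w with
  | nil => simp at hw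
  | @cons _ b _ h w =>
    obtain ⟨r, n⟩ := b
    obtain ⟨-, hid⟩ := horoball_walk_bound G hconn w
    have hid' : G.dist r y + 2 ^ n ≤ 2 ^ (w.length + 0) := hid
    simp only [Nat.add_zero] at hid'
    simp only [SimpleGraph.Walk.length_cons, Nat.add_sub_cancel]
    rcases h with ⟨h1, h2 | h2⟩ | ⟨h1, -, h3⟩
    · exact absurd (h2 : (0:ℕ) = n + 1) (by omega)
    · -- vertical step up to (x, 1)
      have h1' : x = r := h1
      have h2' : n = 1 := h2
      subst h2'
      rw [pow_one] at hid'
      have hd : G.dist x y = G.dist r y := by rw [h1']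
      omega
    · -- horizontal step at level 0
      have h1' : n = 0 := (h1 : (0:ℕ) = n).symm
      have h3' : G.dist x r ≤ 1 := h3
      subst h1'
      rw [pow_zero] at hid'
      have htri : G.dist x y ≤ G.dist x r + G.dist r y := hconn.dist_triangle
      omega

/-- A walk in `G` gives reachability at level `0` of the horoball. -/
private lemma horoball_reachable {V : Type*} (G : SimpleGraph V) {p q : V}
    (w : G.Walk p q) : G.horoball.Reachable (p, 0) (q, 0) := by
  induction w with
  | nil => exact SimpleGraph.Reachable.refl _
  | @cons u v _ h _ ih =>
    refine SimpleGraph.Reachable.trans (SimpleGraph.Adj.reachable ?_) ih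
    exact Or.inr ⟨rfl, h.ne, by
      simpa using G.dist_le (SimpleGraph.Walk.cons h SimpleGraph.Walk.nil)⟩

/-- Lemma 1.3 (Groves–Manning): for vertices `x, y` of a connected graph `Γ`, viewed
at level `0` of the combinatorial horoball, if `d_Γ(x,y) ≥ 2` then
`d_{Hor(Γ)}(x,y) ≥ (2/3)·log₂(d_Γ(x,y)) + 1`. -/
theorem horoball_dist_lower_bound {V : Type*} (G : SimpleGraph V)
    (hconn : G.Connected) (x y : V) (h2 : 2 ≤ G.dist x y) :
    (2 / 3 : ℝ) * Real.logb 2 (G.dist x y : ℝ) + 1 ≤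
      (G.horoball.dist (x, 0) (y, 0) : ℝ) := by
  have hxy : x ≠ y := by
    rintro rfl
    simp [SimpleGraph.dist_self] at h2
  have hreach : G.horoball.Reachable (x, 0) (y, 0) :=
    horoball_reachable G (hconn x y).some
  obtain ⟨w, hw⟩ := hreach.exists_walk_length_eq_dist
  have hL0 : w.length ≠ 0 := by
    intro h0
    exact hxy (congrArg Prod.fst (SimpleGraph.Walk.eq_of_length_eq_zero h0))
  have hDB : G.dist x y ≤ 2 ^ (w.length - 1) := horoball_walk_bound0 G hconn w hL0
  set L : ℕ := G.horoball.dist (x, 0) (y, 0) with hLdef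
  have hwL : w.length = L := hw
  have hL1 : 1 ≤ L := by omega
  have hDle : (G.dist x y : ℝ) ≤ (2:ℝ) ^ (L - 1) := by
    have : G.dist x y ≤ 2 ^ (L - 1) := hwL ▸ hDB
    exact_mod_cast this
  have hD1 : (1:ℝ) ≤ (G.dist x y : ℝ) := by exact_mod_cast (by omega : 1 ≤ G.dist x y)
  have hlog0 : 0 ≤ Real.logb 2 (G.dist x y : ℝ) := Real.logb_nonneg (by norm_num) hD1
  have hlogle : Real.logb 2 (G.dist x y : ℝ) ≤ (L - 1 : ℕ) := by
    calc Real.logb 2 (G.dist x y : ℝ) ≤ Real.logb 2 ((2:ℝ) ^ (L - 1)) :=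
          Real.logb_le_logb_of_le (by norm_num) (by linarith) hDle
      _ = (L - 1 : ℕ) := by
          rw [Real.logb_pow, Real.logb_self_eq_one (by norm_num)]
          ring
  have hcastL : ((L - 1 : ℕ) : ℝ) = (L : ℝ) - 1 := by
    have h1L : (1:ℕ) ≤ L := hL1
    push_cast [Nat.cast_sub h1L]
    ring
  rw [hcastL] at hlogle
  linarith
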